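/- Distribution principle for packing entropy on shift spaces: Let $Z\subset\Sigma$ and $s\ge 0$. Suppose there exist a probability measure $\mu$ on $Z$, a constant $C>0$ and a sequence $n_1<n_2<\cdots\to\infty$ such that for every $x\in Z$ and every $i$, $\mu([x|_{[0,n_i)}]\cap Z)\le C e^{-s n_i}$. Then the packing entropy satisfies $h^P(Z)\ge s$. -/

import Mathlib

open scoped ENNReal

/-- The cylinder set of a finite word `w` in the full shift `A^ℕ`. -/
def cylW {A : Type*} (w : Σ n : ℕ, Fin n → A) : Set (ℕ → A) :=
  {x | ∀ i : Fin w.1, x (i : ℕ) = w.2 i}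

/-- `𝓟ˢ_N(Z)`: supremum of `∑ e^{-s|W|}` over families of pairwise disjoint cylinders
of length `≥ N`, each meeting `Z`. -/
noncomputable def PsN {A : Type*} (s : ℝ) (N : ℕ) (Z : Set (ℕ → A)) : ℝ≥0∞ :=
  ⨆ (𝒲 : Set (Σ n : ℕ, Fin n → A))
    (_ : (∀ w ∈ 𝒲, N ≤ w.1 ∧ (cylW w ∩ Z).Nonempty) ∧
      𝒲.Pairwise fun u v => Disjoint (cylW u) (cylW v)),
    ∑' w : 𝒲, ENNReal.ofReal (Real.exp (-s * (w : Σ n : ℕ, Fin n → A).1))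

/-- `𝓟ˢ_*(Z) = lim_{N→∞} 𝓟ˢ_N(Z)` (the quantities are nonincreasing in `N`). -/
noncomputable def PsStar {A : Type*} (s : ℝ) (Z : Set (ℕ → A)) : ℝ≥0∞ :=
  ⨅ N : ℕ, PsN s N Z

/-- `𝓟ˢ(Z)`: infimum of `∑ᵢ 𝓟ˢ_*(Zᵢ)` over countable covers `Z ⊆ ⋃ᵢ Zᵢ`. -/
noncomputable def Ps {A : Type*} (s : ℝ) (Z : Set (ℕ → A)) : ℝ≥0∞ :=
  ⨅ (Zs : ℕ → Set (ℕ → A)) (_ : Z ⊆ ⋃ i : ℕ, Zs i), ∑' i : ℕ, PsStar s (Zs i)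

/-- Packing entropy of `Z ⊆ A^ℕ`. -/
noncomputable def packingEntropy {A : Type*} (Z : Set (ℕ → A)) : ℝ :=
  sInf {s : ℝ | 0 ≤ s ∧ Ps s Z = 0}

open MeasureTheory

-- disjointness of distinct same-length cylinders
lemma cylW_disjoint' {A : Type*} {n : ℕ} {u v : Fin n → A} (h : u ≠ v) :
    Disjoint (cylW ⟨n, u⟩) (cylW ⟨n, v⟩) := by
  rw [Set.disjoint_left]
  intro x hx hx'
  exact h (funext fun i => (hx i).symm.trans (hx' i))

-- lower bound lemma
lemma psn_lower {A : Type*} [Fintype A] [MeasurableSpace (ℕ → A)]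
    (Z Y : Set (ℕ → A)) (s t : ℝ) (hts : t ≤ s)
    (μ : MeasureTheory.Measure (ℕ → A)) (C : ℝ) (hC : 0 < C)
    (nseq : ℕ → ℕ) (hmono : StrictMono nseq)
    (hμ : ∀ x ∈ Z, ∀ i : ℕ,
      μ (cylW ⟨nseq i, fun j => x (j : ℕ)⟩ ∩ Z)
        ≤ ENNReal.ofReal (C * Real.exp (-s * nseq i))) (N : ℕ) :
    μ (Y ∩ Z) / ENNReal.ofReal C ≤ PsN t N Y := by
  classical
  set n := nseq N with hn
  have hNn : N ≤ n := hmono.le_apply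
  set F : Set (Fin n → A) := {f | ∃ x, x ∈ Y ∩ Z ∧ (fun j : Fin n => x (j : ℕ)) = f} with hF
  set 𝒲 : Set (Σ m : ℕ, Fin m → A) := (fun f => (⟨n, f⟩ : Σ m : ℕ, Fin m → A)) '' F with h𝒲
  have h𝒲fin : 𝒲.Finite := (Set.toFinite F).image _
  have hcount : Countable ↥𝒲 := h𝒲fin.countable.to_subtype
  have hval : ∀ w ∈ 𝒲, N ≤ w.1 ∧ (cylW w ∩ Y).Nonempty := by
    rintro w ⟨f, ⟨x, hx, hfx⟩, rfl⟩
    refine ⟨hNn, ⟨x, ?_, hx.1⟩⟩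
    intro i
    exact congrFun hfx i
  have hpair : 𝒲.Pairwise fun u v => Disjoint (cylW u) (cylW v) := by
    rintro w ⟨f, _, rfl⟩ v ⟨g, _, rfl⟩ hne
    exact cylW_disjoint' (fun h => hne (by rw [h]))
  have hcover : Y ∩ Z ⊆ ⋃ w : 𝒲, (cylW (w : Σ m : ℕ, Fin m → A) ∩ Z) := by
    intro x hx
    refine Set.mem_iUnion.mpr ⟨⟨⟨n, fun j => x (j : ℕ)⟩, ⟨fun j => x (j : ℕ), ⟨x, hx, rfl⟩, rfl⟩⟩, ?_, hx.2⟩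
    intro i; rfl
  have hterm : ∀ w : ↥𝒲, μ (cylW (w : Σ m : ℕ, Fin m → A) ∩ Z)
      ≤ ENNReal.ofReal C * ENNReal.ofReal (Real.exp (-t * ((w : Σ m : ℕ, Fin m → A).1))) := by
    rintro ⟨w, f, ⟨x, hx, hfx⟩, rfl⟩
    have h1 : μ (cylW ⟨n, f⟩ ∩ Z) ≤ ENNReal.ofReal (C * Real.exp (-s * n)) := by
      rw [← hfx]; exact hμ x hx.2 N
    refine h1.trans ?_
    rw [ENNReal.ofReal_mul hC.le]
    refine mul_le_mul_right (ENNReal.ofReal_le_ofReal (Real.exp_le_exp.mpr ?_)) _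
    simp only []
    nlinarith [Nat.cast_nonneg (α := ℝ) n]
  have key : μ (Y ∩ Z) ≤ ENNReal.ofReal C *
      ∑' w : ↥𝒲, ENNReal.ofReal (Real.exp (-t * ((w : Σ m : ℕ, Fin m → A).1))) := by
    calc μ (Y ∩ Z) ≤ μ (⋃ w : 𝒲, (cylW (w : Σ m : ℕ, Fin m → A) ∩ Z)) := measure_mono hcover
      _ ≤ ∑' w : ↥𝒲, μ (cylW (w : Σ m : ℕ, Fin m → A) ∩ Z) := measure_iUnion_le _
      _ ≤ ∑' w : ↥𝒲, ENNReal.ofReal C * ENNReal.ofReal (Real.exp (-t * ((w : Σ m : ℕ, Fin m → A).1))) :=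
          ENNReal.tsum_le_tsum hterm
      _ = _ := ENNReal.tsum_mul_left
  have hdiv : μ (Y ∩ Z) / ENNReal.ofReal C ≤
      ∑' w : ↥𝒲, ENNReal.ofReal (Real.exp (-t * ((w : Σ m : ℕ, Fin m → A).1))) := by
    have hCne : ENNReal.ofReal C ≠ 0 := (ENNReal.ofReal_pos.mpr hC).ne'
    rw [ENNReal.div_le_iff_le_mul (Or.inl hCne) (Or.inl ENNReal.ofReal_ne_top)]
    rw [mul_comm]; exact key
  refine hdiv.trans ?_
  exact le_iSup₂_of_le 𝒲 ⟨hval, hpair⟩ le_rfl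


lemma exists_ps_zero {A : Type*} [Fintype A] [Nonempty A] (Z : Set (ℕ → A)) :
    ∃ t : ℝ, 0 ≤ t ∧ Ps t Z = 0 := by
  classical
  set k : ℝ := (Fintype.card A : ℝ) with hk
  have hk1 : 1 ≤ k := by
    have h := Fintype.card_pos (α := A)
    rw [hk]; exact_mod_cast h
  have h2k : (0:ℝ) < 2 * k := by linarith
  set t : ℝ := 2 * Real.log (2 * k) with ht
  have ht0 : 0 ≤ t := by
    have := Real.log_nonneg (by linarith : (1:ℝ) ≤ 2 * k)
    linarith
  refine ⟨t, ht0, ?_⟩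
  set a : ℝ≥0∞ := ENNReal.ofReal (Real.exp (-(t/2))) with ha
  have hexp : Real.exp (-(t/2)) = (2 * k)⁻¹ := by
    rw [Real.exp_neg]
    congr 1
    have : t / 2 = Real.log (2 * k) := by rw [ht]; ring
    rw [this, Real.exp_log h2k]
  have ha1 : a < 1 := by
    rw [ha, hexp]
    rw [ENNReal.ofReal_lt_one]
    rw [inv_lt_one_iff₀]
    right; linarith
  have hka : (Fintype.card A : ℝ≥0∞) * a ≤ 2⁻¹ := by
    rw [ha, hexp]
    have : (Fintype.card A : ℝ≥0∞) = ENNReal.ofReal k := by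
      rw [hk]; simp
    rw [this, ← ENNReal.ofReal_mul (by linarith : (0:ℝ) ≤ k)]
    have hval : k * (2 * k)⁻¹ = 2⁻¹ := by
      field_simp
    rw [hval]
    rw [show ((2:ℝ)⁻¹) = ((2⁻¹ : ℝ≥0∞)).toReal by simp]
    exact ENNReal.ofReal_toReal_le
  -- bound PsN
  have hbound : ∀ N : ℕ, PsN t N Z ≤ a ^ N * 2 := by
    intro N
    refine iSup₂_le fun 𝒲 hW => ?_
    calc ∑' w : ↥𝒲, ENNReal.ofReal (Real.exp (-t * ((w : Σ n : ℕ, Fin n → A).1)))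
        ≤ ∑' w : ↥𝒲, a ^ N * a ^ ((w : Σ n : ℕ, Fin n → A).1) := by
          refine ENNReal.tsum_le_tsum fun w => ?_
          set m := ((w : Σ n : ℕ, Fin n → A).1) with hm
          have hNm : N ≤ m := (hW.1 _ w.2).1
          have heq : Real.exp (-t * m) = (Real.exp (-(t/2)))^m * (Real.exp (-(t/2)))^m := by
            rw [← Real.exp_nat_mul, ← Real.exp_add]
            congr 1; ring
          rw [heq, ENNReal.ofReal_mul (by positivity), ha,
            ENNReal.ofReal_pow (Real.exp_nonneg _)]
          exact mul_le_mul_left (pow_le_pow_right_of_le_one' ha1.le hNm) _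
      _ = a ^ N * ∑' w : ↥𝒲, a ^ ((w : Σ n : ℕ, Fin n → A).1) := ENNReal.tsum_mul_left
      _ ≤ a ^ N * ∑' w : (Σ n : ℕ, Fin n → A), a ^ w.1 := by
          refine mul_le_mul_right ?_ _
          exact ENNReal.tsum_comp_le_tsum_of_injective Subtype.val_injective
            (fun w : (Σ n : ℕ, Fin n → A) => a ^ w.1)
      _ = a ^ N * ∑' n : ℕ, ((Fintype.card A : ℝ≥0∞) * a) ^ n := by
          have hsig : ∑' w : (Σ n : ℕ, Fin n → A), a ^ w.1
              = ∑' (n : ℕ) (_v : Fin n → A), a ^ n :=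
            ENNReal.tsum_sigma (fun n (_ : Fin n → A) => a ^ n)
          rw [hsig]
          congr 1
          refine tsum_congr fun n => ?_
          rw [tsum_fintype, Finset.sum_const, Finset.card_univ, mul_pow]
          simp [nsmul_eq_mul, Fintype.card_fun]
      _ ≤ a ^ N * ∑' n : ℕ, (2⁻¹ : ℝ≥0∞) ^ n := by
          exact mul_le_mul_right (ENNReal.tsum_le_tsum fun n => pow_le_pow_left' hka n) _
      _ = a ^ N * (1 - 2⁻¹)⁻¹ := by rw [ENNReal.tsum_geometric]
      _ = a ^ N * 2 := by rw [ENNReal.one_sub_inv_two]; norm_num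
  have hstar : PsStar t Z = 0 := by
    refine le_antisymm ?_ zero_le
    have htend : Filter.Tendsto (fun N : ℕ => a ^ N * 2) Filter.atTop (nhds 0) := by
      have h1 := ENNReal.tendsto_pow_atTop_nhds_zero_of_lt_one ha1
      have := ENNReal.Tendsto.mul_const h1 (Or.inr (by norm_num : (2:ℝ≥0∞) ≠ ⊤))
      simpa using this
    exact ge_of_tendsto' htend fun N => (iInf_le _ N).trans (hbound N)
  refine le_antisymm ?_ zero_le
  refine le_trans (iInf₂_le (fun _ => Z) ?_) ?_
  · intro x hx; exact Set.mem_iUnion.mpr ⟨0, hx⟩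
  · simp [hstar]


/-- Distribution principle for packing entropy: if a probability measure `μ` on `Z`
satisfies `μ([x|_{[0,nᵢ)}] ∩ Z) ≤ C e^{-s nᵢ}` for all `x ∈ Z` along a strictly
increasing sequence `nᵢ → ∞`, then `h^P(Z) ≥ s`. -/
theorem packingEntropy_ge_of_distribution {A : Type*} [Fintype A]
    [MeasurableSpace (ℕ → A)] (Z : Set (ℕ → A)) (s : ℝ) (hs : 0 ≤ s)
    (μ : MeasureTheory.Measure (ℕ → A)) [MeasureTheory.IsProbabilityMeasure μ]
    (hZ : μ Z = 1) (C : ℝ) (hC : 0 < C) (nseq : ℕ → ℕ) (hmono : StrictMono nseq)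
    (hμ : ∀ x ∈ Z, ∀ i : ℕ,
      μ (cylW ⟨nseq i, fun j => x (j : ℕ)⟩ ∩ Z)
        ≤ ENNReal.ofReal (C * Real.exp (-s * nseq i))) :
    s ≤ packingEntropy Z := by
  classical
  have hA : Nonempty A := by
    by_contra h
    rw [not_nonempty_iff] at h
    have hze : Z = ∅ := Set.eq_empty_of_isEmpty Z
    rw [hze] at hZ
    simp at hZ
  obtain ⟨t₀, ht₀0, ht₀⟩ := exists_ps_zero (A := A) Z
  refine le_csInf ⟨t₀, ht₀0, ht₀⟩ ?_
  rintro t ⟨ht0, htPs⟩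
  by_contra hlt
  push_neg at hlt
  have hClow : (ENNReal.ofReal C)⁻¹ ≤ Ps t Z := by
    refine le_iInf fun Zs => le_iInf fun hcov => ?_
    calc (ENNReal.ofReal C)⁻¹ = μ Z / ENNReal.ofReal C := by rw [hZ, one_div]
      _ ≤ μ (⋃ i : ℕ, Zs i ∩ Z) / ENNReal.ofReal C := by
          refine ENNReal.div_le_div_right (measure_mono ?_) _
          intro x hx
          obtain ⟨i, hi⟩ := Set.mem_iUnion.mp (hcov hx)
          exact Set.mem_iUnion.mpr ⟨i, hi, hx⟩
      _ ≤ (∑' i : ℕ, μ (Zs i ∩ Z)) / ENNReal.ofReal C :=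
          ENNReal.div_le_div_right (measure_iUnion_le _) _
      _ = ∑' i : ℕ, μ (Zs i ∩ Z) / ENNReal.ofReal C := by
          simp only [div_eq_mul_inv, ENNReal.tsum_mul_right]
      _ ≤ ∑' i : ℕ, PsStar t (Zs i) :=
          ENNReal.tsum_le_tsum fun i => le_iInf fun N =>
            psn_lower Z (Zs i) s t hlt.le μ C hC nseq hmono hμ N
  rw [htPs] at hClow
  exact ENNReal.ofReal_ne_top (ENNReal.inv_eq_zero.mp (le_zero_iff.mp hClow))
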